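/- arXiv:1407.4054 — 4 statements merged into one kernel-verified Lean document; each statement's English description precedes it below -/
import Mathlib

section
/- For any two finite sequences D and X of positive integers (with X nonempty), ⟨D,X⟩ = (1 + [⟵D]·[X]) · ⟨D⟩ · ⟨X⟩, where ⟵D denotes the reversal of D, and [Y] denotes the value of the continued fraction with partial quotients Y (with [∅] = 0). -/
/-- Continuant of a list of naturals: `cont [] = 1`, `cont [d] = d`,
`cont (d₁,…,d_k) = d₁·cont (d₂,…,d_k) + cont (d₃,…,d_k)`. -/
def cont : List ℕ → ℕ
  | [] => 1
  | [d] => d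
  | d :: e :: rest => d * cont (e :: rest) + cont rest

/-- Value of the finite continued fraction `[d₁,…,d_k] = 1/(d₁+1/(d₂+⋯+1/d_k))`,
with `cfv [] = 0`. -/
noncomputable def cfv : List ℕ → ℝ
  | [] => 0
  | d :: rest => 1 / (d + cfv rest)

theorem cont_key : ∀ (D : List ℕ), D ≠ [] → ∀ (x : ℕ) (X : List ℕ),
    cont (D ++ x :: X) = cont D * cont (x :: X) + cont D.dropLast * cont X
  | [d], _, x, X => by
    simp [cont]
  | [d, e], _, x, X => by
    simp only [List.cons_append, List.nil_append]
    show cont (d :: e :: x :: X) = _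
    have h := cont_key [e] (by simp) x X
    simp only [List.cons_append, List.nil_append] at h
    simp [cont, h]
    ring
  | d :: e :: f :: rest, _, x, X => by
    have h1 := cont_key (e :: f :: rest) (by simp) x X
    have h2 := cont_key (f :: rest) (by simp) x X
    simp only [List.cons_append] at h1 h2 ⊢
    show cont (d :: e :: f :: (rest ++ x :: X)) = _
    rw [show cont (d :: e :: f :: (rest ++ x :: X))
        = d * cont (e :: f :: (rest ++ x :: X)) + cont (f :: (rest ++ x :: X)) from rfl,
      h1, h2]
    simp only [List.dropLast]
    rw [show cont (d :: e :: (f :: rest).dropLast)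
        = d * cont (e :: (f :: rest).dropLast) + cont ((f :: rest).dropLast) from by
      cases rest <;> rfl]
    show _ = (d * cont (e :: f :: rest) + cont (f :: rest)) * cont (x :: X) + _
    ring

theorem cont_pos : ∀ (L : List ℕ), (∀ d ∈ L, 0 < d) → 0 < cont L
  | [], _ => Nat.one_pos
  | [d], h => h d (by simp)
  | d :: e :: rest, h => by
    have h1 := cont_pos (e :: rest) (fun a ha => h a (by simp at ha ⊢; tauto))
    have h2 := h d (by simp)
    show 0 < d * cont (e :: rest) + cont rest
    positivity

theorem cont_reverse : ∀ (L : List ℕ), cont L.reverse = cont L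
  | [] => rfl
  | [d] => rfl
  | d :: e :: rest => by
    have h1 : (d :: e :: rest).reverse = (e :: rest).reverse ++ d :: [] := by simp
    rw [h1, cont_key _ (by simp) d []]
    have h2 : (e :: rest).reverse.dropLast = rest.reverse := by
      rw [List.dropLast_reverse]; rfl
    rw [h2, cont_reverse (e :: rest), cont_reverse rest]
    show _ = d * cont (e :: rest) + cont rest
    simp [cont, Nat.mul_comm]
termination_by L => L.length

theorem cfv_eq : ∀ (x : ℕ) (X : List ℕ), (∀ d ∈ x :: X, 0 < d) →
    cfv (x :: X) = cont X / cont (x :: X)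
  | x, [], h => by
    simp [cfv, cont]
  | x, y :: rest, h => by
    have hpos : (0:ℝ) < cont (y :: rest) := by
      exact_mod_cast cont_pos _ (fun a ha => h a (by simp at ha ⊢; tauto))
    have hpos2 : (0:ℝ) < cont (x :: y :: rest) := by
      exact_mod_cast cont_pos _ h
    have ih := cfv_eq y rest (fun a ha => h a (by simp at ha ⊢; tauto))
    rw [show cfv (x :: y :: rest) = 1 / (x + cfv (y :: rest)) from rfl, ih]
    have hc : (cont (x :: y :: rest) : ℝ) = x * cont (y :: rest) + cont rest := by
      exact_mod_cast rfl
    rw [hc]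
    field_simp
    try ring

theorem continuant_concat_formula (D X : List ℕ)
    (hD : ∀ d ∈ D, 0 < d) (hX : ∀ d ∈ X, 0 < d) (hXne : X ≠ []) :
    (cont (D ++ X) : ℝ) = (1 + cfv D.reverse * cfv X) * cont D * cont X := by
  obtain ⟨x, X', rfl⟩ : ∃ x X', X = x :: X' := by
    cases X with
    | nil => exact absurd rfl hXne
    | cons a b => exact ⟨a, b, rfl⟩
  rcases eq_or_ne D [] with rfl | hDne
  · simp [cfv, cont]
  · obtain ⟨d, D', rfl⟩ : ∃ d D', D = d :: D' := by
      cases D with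
      | nil => exact absurd rfl hDne
      | cons a b => exact ⟨a, b, rfl⟩
    have hrev : (d :: D').reverse ≠ [] := by simp
    obtain ⟨r, R, hR⟩ : ∃ r R, (d :: D').reverse = r :: R := by
      cases h : (d :: D').reverse with
      | nil => exact absurd h hrev
      | cons a b => exact ⟨a, b, rfl⟩
    have hrevmem : ∀ a ∈ (d :: D').reverse, 0 < a := fun a ha => hD a (List.mem_reverse.mp ha)
    have hcfvD : cfv (d :: D').reverse = cont ((d :: D').dropLast) / cont (d :: D') := by
      rw [hR, cfv_eq r R (hR ▸ hrevmem)]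
      have h0 : R.reverse ++ [r] = d :: D' := by simpa using (congrArg List.reverse hR).symm
      have h1 : (d :: D').dropLast = R.reverse := by rw [← h0, List.dropLast_concat]
      rw [h1, cont_reverse, ← hR, cont_reverse]
    have hcfvX := cfv_eq x X' hX
    have hkey := cont_key (d :: D') (by simp) x X'
    have hDpos : (0:ℝ) < cont (d :: D') := by exact_mod_cast cont_pos _ hD
    have hXpos : (0:ℝ) < cont (x :: X') := by exact_mod_cast cont_pos _ hX
    rw [hcfvD, hcfvX]
    rw [show ((cont ((d :: D') ++ x :: X') : ℕ) : ℝ)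
        = (cont (d :: D') : ℝ) * cont (x :: X') + cont ((d :: D').dropLast) * cont X' from by
      exact_mod_cast congrArg Nat.cast hkey]
    field_simp
end

section
/- Let A ≥ 2 be an integer, and let T and W be nonempty finite sequences of integers from {1,…,A} of equal length whose first elements differ. Then |[W] − [T]| ≥ 1/(2A³). -/
lemma cfv_nonneg : ∀ L : List ℕ, (∀ d ∈ L, 1 ≤ d) → 0 ≤ cfv L
  | [], _ => le_of_eq rfl
  | d :: rest, h => by
      have hd : (1:ℝ) ≤ d := by exact_mod_cast h d (by simp)
      have hr := cfv_nonneg rest (fun x hx => h x (by simp [hx]))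
      rw [cfv]
      positivity

lemma cfv_le_one (d : ℕ) (rest : List ℕ) (hd : 1 ≤ d) (h : ∀ x ∈ rest, 1 ≤ x) :
    cfv (d :: rest) ≤ 1 := by
  have hd' : (1:ℝ) ≤ d := by exact_mod_cast hd
  have hr := cfv_nonneg rest h
  rw [cfv]
  rw [div_le_one (by linarith)]
  linarith

lemma cfv_ge (A d : ℕ) (rest : List ℕ) (hd1 : 1 ≤ d) (hdA : d ≤ A)
    (h : ∀ x ∈ rest, 1 ≤ x ∧ x ≤ A) :
    1 / ((A : ℝ) + 1) ≤ cfv (d :: rest) := by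
  have hdA' : (d:ℝ) ≤ A := by exact_mod_cast hdA
  have hd' : (1:ℝ) ≤ d := by exact_mod_cast hd1
  have hr1 : cfv rest ≤ 1 := by
    cases rest with
    | nil => simp [cfv]
    | cons e t => exact cfv_le_one e t (h e (by simp)).1 (fun x hx => (h x (by simp [hx])).1)
  have hr0 := cfv_nonneg rest (fun x hx => (h x hx).1)
  rw [cfv]
  apply one_div_le_one_div_of_le (by linarith)
  linarith

lemma key (A a b : ℕ) (hA : 2 ≤ A) (ha1 : 1 ≤ a) (hbA : b ≤ A) (hab : a < b)
    (tT tW : List ℕ) (htT : ∀ x ∈ tT, 1 ≤ x ∧ x ≤ A) (htW : ∀ x ∈ tW, 1 ≤ x ∧ x ≤ A)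
    (hlen : tT.length = tW.length) :
    1 / (2 * (A : ℝ) ^ 3) ≤ cfv (a :: tT) - cfv (b :: tW) := by
  have hA' : (2:ℝ) ≤ A := by exact_mod_cast hA
  have ha1' : (1:ℝ) ≤ a := by exact_mod_cast ha1
  have hbA' : (b:ℝ) ≤ A := by exact_mod_cast hbA
  have hab' : (a:ℝ) + 1 ≤ b := by exact_mod_cast hab
  have hrT0 := cfv_nonneg tT (fun x hx => (htT x hx).1)
  have hrT1 : cfv tT ≤ 1 := by
    cases tT with
    | nil => simp [cfv]
    | cons e t => exact cfv_le_one e t (htT e (by simp)).1 (fun x hx => (htT x (by simp [hx])).1)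
  have hrW0 := cfv_nonneg tW (fun x hx => (htW x hx).1)
  set rT := cfv tT
  set rW := cfv tW
  have hx : (0:ℝ) < a + rT := by linarith
  have hy : (0:ℝ) < b + rW := by linarith
  have hApos : (0:ℝ) < 2 * (A:ℝ)^3 := by positivity
  rw [cfv, cfv, div_sub_div _ _ (ne_of_gt hx) (ne_of_gt hy), div_le_div_iff₀ hApos (by positivity)]
  cases tW with
  | nil =>
    -- then tT = [] too, rW = 0, rT = 0
    have : tT = [] := List.length_eq_zero_iff.mp (by simpa using hlen)
    have hrT : rT = 0 := by simp [rT, this, cfv]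
    have hrW : rW = 0 := by simp [rW, cfv]
    rw [hrT, hrW]
    have haA : (a:ℝ) ≤ A - 1 := by linarith
    nlinarith [mul_le_mul haA hbA' (by linarith) (by linarith), sq_nonneg ((A:ℝ)-1)]
  | cons e t =>
    have hrWge : 1 / ((A:ℝ) + 1) ≤ rW :=
      cfv_ge A e t (htW e (by simp)).1 (htW e (by simp)).2 (fun x hx => htW x (by simp [hx]))
    have hrW1 : rW ≤ 1 := cfv_le_one e t (htW e (by simp)).1 (fun x hx => (htW x (by simp [hx])).1)
    have hA1 : (0:ℝ) < (A:ℝ) + 1 := by linarith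
    have hrWpos : (0:ℝ) < rW := by
      have : (0:ℝ) < 1 / ((A:ℝ)+1) := by positivity
      linarith
    have hrWA : 1 ≤ rW * ((A:ℝ) + 1) := by
      rw [div_le_iff₀ hA1] at hrWge; linarith
    -- need: 2A³ ((b+rW) - (a+rT)) ≥ (a+rT)(b+rW)
    -- x = a+rT ≤ b (since a+1 ≤ b, rT ≤ 1), y - x ≥ rW + (b - a - rT) ≥ rW
    -- 2A³ rW ≥ A(A+rW)  since rW(2A²-1) ≥ ... from rW(A+1) ≥ 1 and A² ≥ A+1
    have hxb : (a:ℝ) + rT ≤ b := by linarith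
    nlinarith [mul_pos hrWpos hApos, sq_nonneg ((A:ℝ) - 1), mul_nonneg hrW0 (by linarith : (0:ℝ) ≤ A),
      mul_le_mul_of_nonneg_left hxb hy.le, mul_nonneg hrWpos.le (sq_nonneg ((A:ℝ)-1))]

theorem cfv_first_elements_differ (A : ℕ) (hA : 2 ≤ A) (T W : List ℕ)
    (hTne : T ≠ []) (hWne : W ≠ [])
    (hT : ∀ d ∈ T, 1 ≤ d ∧ d ≤ A) (hW : ∀ d ∈ W, 1 ≤ d ∧ d ≤ A)
    (hlen : T.length = W.length) (hhead : T.head hTne ≠ W.head hWne) :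
    1 / (2 * (A : ℝ) ^ 3) ≤ |cfv W - cfv T| := by
  cases T with
  | nil => exact absurd rfl hTne
  | cons a tT =>
  cases W with
  | nil => exact absurd rfl hWne
  | cons b tW =>
  simp only [List.head_cons] at hhead
  simp only [List.length_cons, add_left_inj] at hlen
  have htT : ∀ x ∈ tT, 1 ≤ x ∧ x ≤ A := fun x hx => hT x (by simp [hx])
  have htW : ∀ x ∈ tW, 1 ≤ x ∧ x ≤ A := fun x hx => hW x (by simp [hx])
  rcases lt_or_gt_of_ne hhead with h | h
  · have := key A a b hA (hT a (by simp)).1 (hW b (by simp)).2 h tT tW htT htW hlen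
    rw [abs_sub_comm]
    calc 1 / (2 * (A:ℝ)^3) ≤ cfv (a :: tT) - cfv (b :: tW) := this
    _ ≤ |cfv (a :: tT) - cfv (b :: tW)| := le_abs_self _
  · have := key A b a hA (hW b (by simp)).1 (hT a (by simp)).2 h tW tT htW htT hlen.symm
    calc 1 / (2 * (A:ℝ)^3) ≤ cfv (b :: tW) - cfv (a :: tT) := this
    _ ≤ |cfv (b :: tW) - cfv (a :: tT)| := le_abs_self _
end

section
/- Let A ≥ 2 be an integer, and let D, T, W be finite sequences of integers from the alphabet {1,…,A}, with T and W nonempty, of equal length, and differing in their first elements. Then |[D,T] − [D,W]| ≥ 1/((2A)⁴·⟨D⟩²), where [D,X] denotes the continued fraction whose partial quotients are the concatenation of D and X, and ⟨D⟩ is the continuant of D. -/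
/-- the matrix (a,b,c,e) of the Möbius transform x ↦ (a x + b)/(c x + e) given by D. -/
def cm : List ℕ → ℕ × ℕ × ℕ × ℕ
  | [] => (1, 0, 0, 1)
  | d :: D => ((cm D).2.2.1, (cm D).2.2.2, (cm D).1 + d * (cm D).2.2.1, (cm D).2.1 + d * (cm D).2.2.2)

lemma cm_e_eq_cont : ∀ D : List ℕ, (cm D).2.2.2 = cont D := by
  intro D
  induction D using cont.induct with
  | case1 => rfl
  | case2 d => simp [cm, cont]
  | case3 d e rest ih1 ih2 => simp [cm, cont, ← ih1, ← ih2]; ring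

lemma cm_inv (D : List ℕ) (hD : ∀ d ∈ D, 1 ≤ d) :
    (cm D).2.2.1 ≤ (cm D).2.2.2 ∧ (cm D).1 + (cm D).2.2.1 ≤ (cm D).2.1 + (cm D).2.2.2 ∧
      1 ≤ (cm D).2.2.2 ∧
      (((cm D).1 : ℤ) * (cm D).2.2.2 - (cm D).2.1 * (cm D).2.2.1 = 1 ∨
       ((cm D).1 : ℤ) * (cm D).2.2.2 - (cm D).2.1 * (cm D).2.2.1 = -1) := by
  induction D with
  | nil => simp [cm]
  | cons d D ih =>
    have hd : 1 ≤ d := hD d (by simp)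
    obtain ⟨h1, h2, h3, h4⟩ := ih (fun x hx => hD x (by simp [hx]))
    refine ⟨?_, ?_, ?_, ?_⟩
    · simp only [cm]
      nlinarith
    · simp only [cm]
      nlinarith
    · simp only [cm]
      nlinarith
    · simp only [cm]
      rcases h4 with h | h
      · right; push_cast; push_cast at h; nlinarith
      · left; push_cast; push_cast at h; nlinarith

lemma cfv_nonneg_s7 (X : List ℕ) (hX : ∀ d ∈ X, 1 ≤ d) : 0 ≤ cfv X := by
  induction X with
  | nil => simp [cfv]
  | cons d r ih =>
    have hd : 1 ≤ d := hX d (by simp)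
    have := ih (fun x hx => hX x (by simp [hx]))
    have h1 : (1:ℝ) ≤ (d:ℝ) := by exact_mod_cast hd
    simp only [cfv]
    positivity

lemma cfv_le_one_s7 (X : List ℕ) (hX : ∀ d ∈ X, 1 ≤ d) : cfv X ≤ 1 := by
  cases X with
  | nil => simp [cfv]
  | cons d r =>
    have hd : 1 ≤ d := hX d (by simp)
    have h0 : 0 ≤ cfv r := cfv_nonneg_s7 r (fun x hx => hX x (by simp [hx]))
    have h1 : (1:ℝ) ≤ (d:ℝ) := by exact_mod_cast hd
    simp only [cfv]
    rw [div_le_one (by linarith)]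
    linarith

lemma cfv_lb (A : ℕ) (X : List ℕ) (hX : ∀ d ∈ X, 1 ≤ d ∧ d ≤ A) (hne : X ≠ []) :
    1 / ((A : ℝ) + 1) ≤ cfv X := by
  cases X with
  | nil => exact absurd rfl hne
  | cons d r =>
    have hd : d ≤ A := (hX d (by simp)).2
    have h0 : 0 ≤ cfv r := cfv_nonneg_s7 r (fun x hx => (hX x (by simp [hx])).1)
    have h1 : cfv r ≤ 1 := cfv_le_one_s7 r (fun x hx => (hX x (by simp [hx])).1)
    have hdA : (d:ℝ) ≤ (A:ℝ) := by exact_mod_cast hd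
    have hA0 : (0:ℝ) < (A:ℝ) + 1 := by positivity
    simp only [cfv]
    have hd1 : (1:ℝ) ≤ (d:ℝ) := by exact_mod_cast (hX d (by simp)).1
    apply one_div_le_one_div_of_le
    · linarith
    · linarith

lemma cfv_formula (D : List ℕ) (hD : ∀ d ∈ D, 1 ≤ d) (X : List ℕ) (hX : 0 ≤ cfv X) :
    cfv (D ++ X) = (((cm D).1 : ℝ) * cfv X + ((cm D).2.1 : ℝ)) /
      (((cm D).2.2.1 : ℝ) * cfv X + ((cm D).2.2.2 : ℝ)) := by
  induction D with
  | nil => simp [cm]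
  | cons d D ih =>
    have hd : (1:ℝ) ≤ (d:ℝ) := by exact_mod_cast hD d (by simp)
    obtain ⟨hc, -, he, -⟩ := cm_inv D (fun x hx => hD x (by simp [hx]))
    have he' : (1:ℝ) ≤ ((cm D).2.2.2 : ℝ) := by exact_mod_cast he
    have hc' : (0:ℝ) ≤ ((cm D).2.2.1 : ℝ) := by positivity
    have hden : (0:ℝ) < ((cm D).2.2.1 : ℝ) * cfv X + ((cm D).2.2.2 : ℝ) := by nlinarith
    have ihh := ih (fun x hx => hD x (by simp [hx]))
    rw [List.cons_append]
    have h1 : cfv (d :: (D ++ X)) = 1 / ((d:ℝ) + cfv (D ++ X)) := rfl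
    have h2 : (d:ℝ) + (((cm D).1 : ℝ) * cfv X + ((cm D).2.1 : ℝ)) /
        (((cm D).2.2.1 : ℝ) * cfv X + ((cm D).2.2.2 : ℝ)) =
        ((((cm D).1 : ℝ) + (d:ℝ) * ((cm D).2.2.1 : ℝ)) * cfv X +
          (((cm D).2.1 : ℝ) + (d:ℝ) * ((cm D).2.2.2 : ℝ))) /
        (((cm D).2.2.1 : ℝ) * cfv X + ((cm D).2.2.2 : ℝ)) := by
      field_simp
      ring
    rw [h1, ihh, h2, one_div_div]
    simp only [cm]
    push_cast
    ring

lemma head_diff (A : ℕ) (hA : 1 ≤ A) (T W : List ℕ)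
    (hT : ∀ d ∈ T, 1 ≤ d ∧ d ≤ A) (hW : ∀ d ∈ W, 1 ≤ d ∧ d ≤ A)
    (hTne : T ≠ []) (hWne : W ≠ [])
    (hlen : T.length = W.length) (hhead : T.head hTne ≠ W.head hWne) :
    1 / ((A : ℝ) + 1) ^ 3 ≤ |cfv T - cfv W| := by
  -- helper with t > w
  have key : ∀ t w : ℕ, ∀ T' W' : List ℕ, w < t → t ≤ A →
      (∀ d ∈ T', 1 ≤ d ∧ d ≤ A) → (∀ d ∈ W', 1 ≤ d ∧ d ≤ A) →
      T'.length = W'.length → 1 ≤ w → w ≤ A →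
      1 / ((A : ℝ) + 1) ^ 3 ≤ cfv (w :: W') - cfv (t :: T') := by
    intro t w T' W' hwt htA hT' hW' hlen' hw1 hwA
    have hr0 : 0 ≤ cfv T' := cfv_nonneg_s7 T' (fun x hx => (hT' x hx).1)
    have hr1 : cfv T' ≤ 1 := cfv_le_one_s7 T' (fun x hx => (hT' x hx).1)
    have hs0 : 0 ≤ cfv W' := cfv_nonneg_s7 W' (fun x hx => (hW' x hx).1)
    have hs1 : cfv W' ≤ 1 := cfv_le_one_s7 W' (fun x hx => (hW' x hx).1)
    have hwt' : (w:ℝ) + 1 ≤ (t:ℝ) := by exact_mod_cast hwt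
    have htA' : (t:ℝ) ≤ (A:ℝ) := by exact_mod_cast htA
    have hwA' : (w:ℝ) ≤ (A:ℝ) := by exact_mod_cast hwA
    have hw1' : (1:ℝ) ≤ (w:ℝ) := by exact_mod_cast hw1
    have hA1 : (0:ℝ) < (A:ℝ) + 1 := by positivity
    -- numerator lower bound
    have hnum : 1 / ((A:ℝ) + 1) ≤ ((t:ℝ) + cfv T') - ((w:ℝ) + cfv W') := by
      rcases List.eq_nil_or_concat T' with h | _
      · subst h
        have : W' = [] := by
          cases W' with
          | nil => rfl
          | cons a l => simp at hlen'
        subst this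
        simp only [cfv]
        rw [div_le_iff₀ hA1]
        nlinarith
      · have hT'ne : T' ≠ [] := by rintro rfl; simp_all
        have hlb : 1 / ((A:ℝ) + 1) ≤ cfv T' := cfv_lb A T' hT' hT'ne
        linarith
    simp only [cfv]
    have hd1 : (0:ℝ) < (t:ℝ) + cfv T' := by linarith
    have hd2 : (0:ℝ) < (w:ℝ) + cfv W' := by linarith
    rw [div_sub_div _ _ (ne_of_gt hd2) (ne_of_gt hd1)]
    have h3 : (1/((A:ℝ)+1)) / (((A:ℝ)+1)^2) = 1/((A:ℝ)+1)^3 := by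
      rw [div_div, ← pow_succ']
    rw [← h3, one_mul, mul_one]
    apply div_le_div₀ (by linarith) hnum (by positivity)
    nlinarith
  cases T with
  | nil => exact absurd rfl hTne
  | cons t T' =>
    cases W with
    | nil => exact absurd rfl hWne
    | cons w W' =>
      simp only [List.head] at hhead
      simp only [List.length_cons, Nat.add_right_cancel_iff] at hlen
      have hT' : ∀ d ∈ T', 1 ≤ d ∧ d ≤ A := fun x hx => hT x (by simp [hx])
      have hW' : ∀ d ∈ W', 1 ≤ d ∧ d ≤ A := fun x hx => hW x (by simp [hx])
      have hp : (0:ℝ) < 1/((A:ℝ)+1)^3 := by positivity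
      rcases lt_or_gt_of_ne hhead with h | h
      · have := key w t W' T' h (hW w (by simp)).2 hW' hT' hlen.symm (hT t (by simp)).1 (hT t (by simp)).2
        rw [abs_of_nonneg (by linarith)]
        linarith
      · have := key t w T' W' h (hT t (by simp)).2 hT' hW' hlen (hW w (by simp)).1 (hW w (by simp)).2
        rw [abs_of_nonpos (by linarith)]
        linarith

set_option maxHeartbeats 1000000 in
theorem lemma_5_1 (A : ℕ) (hA : 2 ≤ A) (D T W : List ℕ)
    (hD : ∀ d ∈ D, 1 ≤ d ∧ d ≤ A)
    (hT : ∀ d ∈ T, 1 ≤ d ∧ d ≤ A) (hW : ∀ d ∈ W, 1 ≤ d ∧ d ≤ A)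
    (hTne : T ≠ []) (hWne : W ≠ [])
    (hlen : T.length = W.length) (hhead : T.head hTne ≠ W.head hWne) :
    1 / ((2 * (A : ℝ)) ^ 4 * (cont D : ℝ) ^ 2) ≤ |cfv (D ++ T) - cfv (D ++ W)| := by
  have hD1 : ∀ d ∈ D, 1 ≤ d := fun x hx => (hD x hx).1
  obtain ⟨hc, hsum, he, hdet⟩ := cm_inv D hD1
  set a : ℝ := ((cm D).1 : ℝ) with ha
  set b : ℝ := ((cm D).2.1 : ℝ) with hb
  set c : ℝ := ((cm D).2.2.1 : ℝ) with hcc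
  set e : ℝ := ((cm D).2.2.2 : ℝ) with hee
  clear_value a b c e
  have hx0 : 0 ≤ cfv T := cfv_nonneg_s7 T (fun x hx => (hT x hx).1)
  have hy0 : 0 ≤ cfv W := cfv_nonneg_s7 W (fun x hx => (hW x hx).1)
  have hx1 : cfv T ≤ 1 := cfv_le_one_s7 T (fun x hx => (hT x hx).1)
  have hy1 : cfv W ≤ 1 := cfv_le_one_s7 W (fun x hx => (hW x hx).1)
  have hc' : (0:ℝ) ≤ c := by rw [hcc]; positivity
  have hce : c ≤ e := by rw [hcc, hee]; exact_mod_cast hc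
  have he' : (1:ℝ) ≤ e := by rw [hee]; exact_mod_cast he
  have hdT : (0:ℝ) < c * cfv T + e := by nlinarith
  have hdW : (0:ℝ) < c * cfv W + e := by nlinarith
  have hfT : cfv (D ++ T) = (a * cfv T + b) / (c * cfv T + e) := by
    rw [ha, hb, hcc, hee]; exact cfv_formula D hD1 T hx0
  have hfW : cfv (D ++ W) = (a * cfv W + b) / (c * cfv W + e) := by
    rw [ha, hb, hcc, hee]; exact cfv_formula D hD1 W hy0
  have hdet' : a * e - b * c = 1 ∨ a * e - b * c = -1 := by
    rcases hdet with h | h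
    · left; rw [ha, hb, hcc, hee]; exact_mod_cast h
    · right
      rw [ha, hb, hcc, hee]
      have := congrArg (fun z : ℤ => (z : ℝ)) h
      push_cast at this
      linarith
  have habsdet : |a * e - b * c| = 1 := by
    rcases hdet' with h | h <;> rw [h] <;> simp
  have key : cfv (D ++ T) - cfv (D ++ W) =
      ((a * e - b * c) * (cfv T - cfv W)) / ((c * cfv T + e) * (c * cfv W + e)) := by
    rw [hfT, hfW]
    field_simp
    ring
  have habs : |cfv (D ++ T) - cfv (D ++ W)| =
      |cfv T - cfv W| / ((c * cfv T + e) * (c * cfv W + e)) := by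
    rw [key, abs_div, abs_mul, habsdet, one_mul, abs_of_pos (mul_pos hdT hdW)]
  rw [habs]
  have hA1 : (1:ℝ) ≤ (A:ℝ) := by exact_mod_cast le_trans one_le_two hA
  have hA2 : (2:ℝ) ≤ (A:ℝ) := by exact_mod_cast hA
  have hhd : 1 / ((A : ℝ) + 1) ^ 3 ≤ |cfv T - cfv W| :=
    head_diff A (le_trans one_le_two hA) T W hT hW hTne hWne hlen hhead
  have hden : (c * cfv T + e) * (c * cfv W + e) ≤ 4 * e ^ 2 := by
    have h1 : c * cfv T + e ≤ 2 * e := by nlinarith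
    have h2 : c * cfv W + e ≤ 2 * e := by nlinarith
    nlinarith
  have step1 : (1 / ((A : ℝ) + 1) ^ 3) / (4 * e ^ 2) ≤
      |cfv T - cfv W| / ((c * cfv T + e) * (c * cfv W + e)) :=
    div_le_div₀ (abs_nonneg _) hhd (mul_pos hdT hdW) hden
  refine le_trans ?_ step1
  have hecont : e = (cont D : ℝ) := by rw [hee, cm_e_eq_cont]
  rw [div_div]
  apply one_div_le_one_div_of_le (mul_pos (by positivity) (by nlinarith : (0:ℝ) < 4 * e ^ 2))
  rw [← hecont]
  have he2 : (1:ℝ) ≤ e ^ 2 := by nlinarith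
  have hcube : ((A:ℝ) + 1) ^ 3 * 4 ≤ (2 * (A:ℝ)) ^ 4 := by nlinarith [sq_nonneg ((A:ℝ) - 1)]
  calc ((A:ℝ) + 1) ^ 3 * (4 * e ^ 2) = (((A:ℝ) + 1) ^ 3 * 4) * e ^ 2 := by ring
    _ ≤ (2 * (A:ℝ)) ^ 4 * e ^ 2 := by nlinarith
end

section
/- Let W be a nonempty finite set and f : W → ℝ≥0. Then for any ε > 0, ∑_{θ∈W} f(θ)² ≤ C(ε)·|W|^ε · max over nonempty subsets Z ⊆ W of (1/|Z|)·(∑_{θ∈Z} f(θ))², for some constant C(ε) depending only on ε. -/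
private lemma my_one_add_log_le_rpow (ε : ℝ) (hε : 0 < ε) (n : ℕ) (hn : 1 ≤ n) :
    1 + Real.log n ≤ (1 + 1 / ε) * (n : ℝ) ^ ε := by
  have hn1 : (1 : ℝ) ≤ n := by exact_mod_cast hn
  have hpow : (1 : ℝ) ≤ (n : ℝ) ^ ε := Real.one_le_rpow hn1 hε.le
  have h1 : ε * Real.log n = Real.log ((n : ℝ) ^ ε) := (Real.log_rpow (by linarith) ε).symm
  have h2 : Real.log ((n : ℝ) ^ ε) ≤ (n : ℝ) ^ ε - 1 :=
    Real.log_le_sub_one_of_pos (by linarith)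
  have hlog : Real.log n ≤ (n : ℝ) ^ ε / ε := by
    rw [le_div_iff₀ hε]; nlinarith
  have he : (n : ℝ) ^ ε / ε = (n : ℝ) ^ ε * (1 / ε) := by ring
  nlinarith [hpow]

private lemma my_harmonic_bound (n : ℕ) :
    ∑ j ∈ Finset.Icc 1 n, (1 : ℝ) / (j : ℝ) ≤ 1 + Real.log n := by
  have h := harmonic_le_one_add_log n
  have he : ((harmonic n : ℚ) : ℝ) = ∑ j ∈ Finset.Icc 1 n, (1 : ℝ) / (j : ℝ) := by
    rw [harmonic_eq_sum_Icc]
    push_cast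
    simp [one_div]
  linarith [he ▸ h]

theorem konyagin_inequality (ε : ℝ) (hε : 0 < ε) :
    ∃ C : ℝ, 0 < C ∧ ∀ (α : Type) (W : Finset α) (f : α → ℝ),
      W.Nonempty → (∀ x ∈ W, 0 ≤ f x) →
      ∃ Z ⊆ W, Z.Nonempty ∧
        ∑ θ ∈ W, f θ ^ 2 ≤
          C * (W.card : ℝ) ^ ε * ((1 / (Z.card : ℝ)) * (∑ θ ∈ Z, f θ) ^ 2) := by
  classical
  refine ⟨1 + 1 / ε, by positivity, ?_⟩
  intro α W f hW hf
  set n := W.card with hn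
  have hn1 : 1 ≤ n := Finset.card_pos.mpr hW
  set val : Finset α → ℝ := fun Z => (1 / (Z.card : ℝ)) * (∑ θ ∈ Z, f θ) ^ 2 with hval
  obtain ⟨Z₀, hZ₀mem, hZ₀max⟩ :=
    Finset.exists_max_image (W.powerset.filter Finset.Nonempty) val
      ⟨W, by simp [hW]⟩
  simp only [Finset.mem_filter, Finset.mem_powerset] at hZ₀mem
  refine ⟨Z₀, hZ₀mem.1, hZ₀mem.2, ?_⟩
  set M := val Z₀ with hM
  have hM0 : 0 ≤ M := by
    rw [hM, hval]; positivity
  -- index function, injective on W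
  set idx : α → ℕ := fun x => List.idxOf x W.toList with hidx
  have hidx_inj : ∀ x ∈ W, ∀ y ∈ W, idx x = idx y → x = y := by
    intro x hx y hy h
    exact (List.idxOf_inj (Finset.mem_toList.mpr hx)).mp h
  -- the "rank sets"
  set P : α → α → Prop := fun θ x => f θ < f x ∨ (f x = f θ ∧ idx θ ≤ idx x) with hP
  set Zs : α → Finset α := fun θ => W.filter (P θ) with hZs
  set k : α → ℕ := fun θ => (Zs θ).card with hk
  have hmem : ∀ θ ∈ W, θ ∈ Zs θ := by
    intro θ hθ
    simp only [hZs, Finset.mem_filter]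
    exact ⟨hθ, Or.inr ⟨rfl, le_refl _⟩⟩
  have hkpos : ∀ θ ∈ W, 0 < k θ := fun θ hθ => Finset.card_pos.mpr ⟨θ, hmem θ hθ⟩
  have hkle : ∀ θ ∈ W, k θ ≤ n := fun θ hθ => Finset.card_le_card (Finset.filter_subset _ _)
  -- key pointwise bound : k θ * f θ ^ 2 ≤ M
  have hkey : ∀ θ ∈ W, f θ ^ 2 ≤ M * (1 / (k θ : ℝ)) := by
    intro θ hθ
    have hfθ : 0 ≤ f θ := hf θ hθ
    have hsub : Zs θ ⊆ W := Finset.filter_subset _ _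
    have hZθne : (Zs θ).Nonempty := ⟨θ, hmem θ hθ⟩
    have hlow : ∀ x ∈ Zs θ, f θ ≤ f x := by
      intro x hx
      simp only [hZs, Finset.mem_filter, hP] at hx
      rcases hx.2 with h | h
      · exact h.le
      · exact h.1.ge
    have hsum : (k θ : ℝ) * f θ ≤ ∑ x ∈ Zs θ, f x := by
      have := Finset.card_nsmul_le_sum (Zs θ) f (f θ) hlow
      rwa [nsmul_eq_mul] at this
    have hval_le : val (Zs θ) ≤ M :=
      hZ₀max _ (by simp [Finset.mem_filter, Finset.mem_powerset, hsub, hZθne])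
    have hkpos' : (0 : ℝ) < (k θ : ℝ) := by exact_mod_cast hkpos θ hθ
    have hsq : ((k θ : ℝ) * f θ) ^ 2 ≤ (∑ x ∈ Zs θ, f x) ^ 2 := by
      apply sq_le_sq' <;> nlinarith
    have h1 : (k θ : ℝ) * f θ ^ 2 ≤ val (Zs θ) := by
      have hve : val (Zs θ) = (∑ x ∈ Zs θ, f x) ^ 2 / (k θ : ℝ) := by
        simp only [hval, hk]
        ring
      rw [hve, le_div_iff₀ hkpos']
      nlinarith
    rw [mul_one_div, le_div_iff₀ hkpos']
    nlinarith
  -- injectivity of k on W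
  have htot : ∀ θ ∈ W, ∀ θ' ∈ W, P θ θ' ∨ P θ' θ := by
    intro θ _ θ' _
    rcases lt_trichotomy (f θ) (f θ') with h | h | h
    · exact Or.inl (Or.inl h)
    · rcases le_total (idx θ) (idx θ') with h' | h'
      · exact Or.inl (Or.inr ⟨h.symm, h'⟩)
      · exact Or.inr (Or.inr ⟨h, h'⟩)
    · exact Or.inr (Or.inl h)
  have htrans : ∀ θ θ' x, P θ θ' → P θ' x → P θ x := by
    intro θ θ' x h1 h2
    rcases h1 with h1 | h1 <;> rcases h2 with h2 | h2
    · exact Or.inl (h1.trans h2)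
    · exact Or.inl (h2.1 ▸ h1)
    · exact Or.inl (h1.1 ▸ h2)
    · exact Or.inr ⟨h2.1.trans h1.1, h1.2.trans h2.2⟩
  have hk_inj : ∀ θ ∈ W, ∀ θ' ∈ W, k θ = k θ' → θ = θ' := by
    intro θ hθ θ' hθ' hkk
    have key : ∀ a ∈ W, ∀ b ∈ W, P a b → k a = k b → a = b := by
      intro a ha b hb hab hk'
      have hsub : Zs b ⊆ Zs a := by
        intro x hx
        simp only [hZs, Finset.mem_filter] at hx ⊢
        exact ⟨hx.1, htrans a b x hab hx.2⟩
      have heq : Zs b = Zs a := Finset.eq_of_subset_of_card_le hsub hk'.le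
      have hba : P b a := by
        have hab' : a ∈ Zs b := heq ▸ hmem a ha
        exact (Finset.mem_filter.mp hab').2
      -- antisymmetry
      rcases hab with h1 | h1 <;> rcases hba with h2 | h2
      · exact absurd (h1.trans h2) (lt_irrefl _)
      · exact absurd h1 (by rw [h2.1]; exact lt_irrefl _)
      · exact absurd h2 (by rw [h1.1]; exact lt_irrefl _)
      · exact hidx_inj a ha b hb (le_antisymm h1.2 h2.2)
    rcases htot θ hθ θ' hθ' with h | h
    · exact key θ hθ θ' hθ' h hkk
    · exact (key θ' hθ' θ hθ h hkk.symm).symm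
  -- harmonic bound on sum of 1/k
  have hsum_inv : ∑ θ ∈ W, (1 : ℝ) / (k θ : ℝ) ≤ 1 + Real.log n := by
    have hsubset : W.image k ⊆ Finset.Icc 1 n := by
      intro j hj
      obtain ⟨θ, hθ, rfl⟩ := Finset.mem_image.mp hj
      exact Finset.mem_Icc.mpr ⟨hkpos θ hθ, hkle θ hθ⟩
    calc ∑ θ ∈ W, (1 : ℝ) / (k θ : ℝ) = ∑ j ∈ W.image k, (1 : ℝ) / (j : ℝ) :=
          (Finset.sum_image (f := fun j : ℕ => (1 : ℝ) / (j : ℝ)) (fun x hx y hy h => hk_inj x hx y hy h)).symm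
      _ ≤ ∑ j ∈ Finset.Icc 1 n, (1 : ℝ) / (j : ℝ) :=
          Finset.sum_le_sum_of_subset_of_nonneg hsubset (fun j _ _ => by positivity)
      _ ≤ 1 + Real.log n := my_harmonic_bound n
  -- put everything together
  have hchain : ∑ θ ∈ W, f θ ^ 2 ≤ M * (1 + Real.log n) := by
    calc ∑ θ ∈ W, f θ ^ 2 ≤ ∑ θ ∈ W, M * (1 / (k θ : ℝ)) :=
          Finset.sum_le_sum hkey
      _ = M * ∑ θ ∈ W, (1 : ℝ) / (k θ : ℝ) := by rw [Finset.mul_sum]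
      _ ≤ M * (1 + Real.log n) := mul_le_mul_of_nonneg_left hsum_inv hM0
  have hfin : M * (1 + Real.log n) ≤ (1 + 1 / ε) * (n : ℝ) ^ ε * M := by
    rw [mul_comm ((1 + 1 / ε) * (n : ℝ) ^ ε) M]
    exact mul_le_mul_of_nonneg_left (my_one_add_log_le_rpow ε hε n hn1) hM0
  calc ∑ θ ∈ W, f θ ^ 2 ≤ M * (1 + Real.log n) := hchain
    _ ≤ (1 + 1 / ε) * (n : ℝ) ^ ε * M := hfin
end
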